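/- Let s ≥ 0, 0 < a < 1, ν > 0, and let w_s(x) = (1 + e^{s x^{1-a}})(1 + e^{-s x^{1-a}}). For t ≥ 0 and x ≥ 0, set y = (x^{1-a} + ν(1-a)t)^{1/(1-a)}. Then w_s(y) ≤ e^{s ν (1-a) t} w_s(x). -/
import Mathlib


theorem weight_estimate (s a ν : ℝ) (hs : 0 ≤ s) (ha : 0 < a) (ha1 : a < 1) (hν : 0 < ν)
    (w : ℝ → ℝ)
    (hw : ∀ x, w x = (1 + Real.exp (s * x ^ (1 - a))) * (1 + Real.exp (-(s * x ^ (1 - a)))))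
    (t x : ℝ) (ht : 0 ≤ t) (hx : 0 ≤ x) :
    w ((x ^ (1 - a) + ν * (1 - a) * t) ^ (1 / (1 - a))) ≤ Real.exp (s * ν * (1 - a) * t) * w x := by
  have h1a : 0 < 1 - a := by linarith
  set u := x ^ (1 - a) with hu
  have hu0 : 0 ≤ u := Real.rpow_nonneg hx _
  have hc0 : 0 ≤ ν * (1 - a) * t := by positivity
  set c := ν * (1 - a) * t with hc
  have hkey : ((u + c) ^ (1 / (1 - a))) ^ (1 - a) = u + c := by
    rw [← Real.rpow_mul (by positivity), one_div, inv_mul_cancel₀ (ne_of_gt h1a),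
      Real.rpow_one]
  rw [hw, hw, hkey]
  have hsc : s * ν * (1 - a) * t = s * c := by ring
  rw [hsc]
  have e1 : Real.exp (s * (u + c)) = Real.exp (s * u) * Real.exp (s * c) := by
    rw [← Real.exp_add]; ring_nf
  have e2 : Real.exp (-(s * (u + c))) = Real.exp (-(s * u)) * Real.exp (-(s * c)) := by
    rw [← Real.exp_add]; ring_nf
  rw [e1, e2]
  set A := Real.exp (s * u) with hA
  set B := Real.exp (-(s * u)) with hB
  set C := Real.exp (s * c) with hC
  set D := Real.exp (-(s * c)) with hD
  have hAB : A * B = 1 := by rw [hA, hB, ← Real.exp_add]; simp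
  have hCD : C * D = 1 := by rw [hC, hD, ← Real.exp_add]; simp
  have hC1 : 1 ≤ C := Real.one_le_exp (by positivity)
  have hD1 : D ≤ 1 := Real.exp_le_one_iff.mpr (by simp; positivity)
  have hB0 : 0 < B := Real.exp_pos _
  have hA0 : 0 < A := Real.exp_pos _
  have hD0 : 0 < D := Real.exp_pos _
  nlinarith [mul_le_mul_of_nonneg_left hD1 hB0.le, mul_le_mul_of_nonneg_left hC1 hB0.le]
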